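/- Let s ∈ ℕ and let t0 ≤ t1 be times satisfying t1 ≥ t0 + Ψ^s(t0)/μ. Then for every w ∈ V, L_w(t1) − L_w(t0) ≥ (t1 − t0) + Ψ_w^s(t0) − κ·D. -/

import Mathlib

open Finset

variable {V : Type*}

/-- Node `v` satisfies the *fast condition* at time `t`. -/
def fastCond (G : SimpleGraph V) (L : V → ℝ → ℝ) (κ : ℝ) (v : V) (t : ℝ) : Prop :=
  ∃ s : ℕ, (∃ x, G.Adj v x ∧ (2 * (s : ℝ) + 1) * κ ≤ L x t - L v t) ∧
    ∀ y, G.Adj v y → L v t - L y t ≤ (2 * (s : ℝ) + 1) * κ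

/-- Node `v` satisfies the *slow condition* at time `t`. -/
def slowCond (G : SimpleGraph V) (L : V → ℝ → ℝ) (κ : ℝ) (v : V) (t : ℝ) : Prop :=
  ∃ s : ℕ, (∃ x, G.Adj v x ∧ 2 * (s : ℝ) * κ ≤ L v t - L x t) ∧
    ∀ y, G.Adj v y → L y t - L v t ≤ 2 * (s : ℝ) * κ

/-- `Ψ_v^s(t) = max_{w ∈ V} (L_w(t) - L_v(t) - 2sκ·d(v,w))`. -/
noncomputable def Psi [Fintype V] [Nonempty V] (G : SimpleGraph V) (L : V → ℝ → ℝ)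
    (κ : ℝ) (s : ℕ) (v : V) (t : ℝ) : ℝ :=
  univ.sup' univ_nonempty fun w => L w t - L v t - 2 * (s : ℝ) * κ * (G.dist v w)

/-- `Ψ^s(t) = max_{v ∈ V} Ψ_v^s(t)`. -/
noncomputable def PsiMax [Fintype V] [Nonempty V] (G : SimpleGraph V) (L : V → ℝ → ℝ)
    (κ : ℝ) (s : ℕ) (t : ℝ) : ℝ :=
  univ.sup' univ_nonempty fun v => Psi G L κ s v t

/-- `Ξ_v^s(t) = max_{w ∈ V} (L_v(t) - L_w(t) - (2s+1)κ·d(v,w))`. -/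
noncomputable def Xi [Fintype V] [Nonempty V] (G : SimpleGraph V) (L : V → ℝ → ℝ)
    (κ : ℝ) (s : ℕ) (v : V) (t : ℝ) : ℝ :=
  univ.sup' univ_nonempty fun w => L v t - L w t - (2 * (s : ℝ) + 1) * κ * (G.dist v w)

/-- The global skew `𝒢(t) = max_{v,w ∈ V} |L_v(t) - L_w(t)|`. -/
noncomputable def GSkew [Fintype V] [Nonempty V] (L : V → ℝ → ℝ) (t : ℝ) : ℝ :=
  univ.sup' univ_nonempty fun p : V × V => |L p.1 t - L p.2 t|

/-- Catch-up, same level: every node catches up to `Ψ_w^s(t0) - κD`. -/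
theorem stmt_8 [Fintype V] [Nonempty V] (G : SimpleGraph V) (hconn : G.Connected)
    (L : V → ℝ → ℝ) (κ ρ μ : ℝ) (hκ : 0 < κ) (hρ : 0 < ρ) (hρμ : ρ < μ)
    (hdiff : ∀ v, Differentiable ℝ (L v))
    (hrate : ∀ v u, 0 ≤ u → 1 ≤ deriv (L v) u ∧ deriv (L v) u ≤ (1 + μ) * (1 + ρ))
    (hfastI : ∀ v u, 0 ≤ u → fastCond G L κ v u → 1 + μ ≤ deriv (L v) u)
    (hslowI : ∀ v u, 0 ≤ u → slowCond G L κ v u → deriv (L v) u ≤ 1 + ρ)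
    (D : ℕ) (hD : D = univ.sup fun p : V × V => G.dist p.1 p.2)
    (s : ℕ) (t0 t1 : ℝ) (ht0 : 0 ≤ t0) (ht01 : t0 ≤ t1)
    (hcatch : t0 + PsiMax G L κ s t0 / μ ≤ t1) :
    ∀ w : V, (t1 - t0) + Psi G L κ s w t0 - κ * D ≤ L w t1 - L w t0 := by
  classical
  have hμ : 0 < μ := hρ.trans hρμ
  set c : ℝ := (2 * (s : ℝ) + 1) * κ with hcdef
  have hc0 : 0 ≤ c := by positivity
  set N : V → ℝ := fun v => univ.sup' univ_nonempty fun w => L w t0 - c * (G.dist v w) with hNdef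
  set f : V → ℝ → ℝ := fun v t => (t - t0) + N v - L v t with hfdef
  set Φ : ℝ → ℝ := fun t => univ.sup' univ_nonempty fun v => f v t with hΦdef
  -- basic growth of clocks
  have hgrow : ∀ (v : V) (x z : ℝ), 0 ≤ x → x ≤ z → L v x + (z - x) ≤ L v z := by
    intro v x z hx hxz
    rcases eq_or_lt_of_le hxz with rfl | hlt
    · simp
    · obtain ⟨d, hd, hds⟩ := exists_deriv_eq_slope (L v) hlt
        ((hdiff v).continuous.continuousOn) ((hdiff v).differentiableOn)
      have h1 : 1 ≤ deriv (L v) d := (hrate v d (hx.trans hd.1.le)).1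
      rw [hds, le_div_iff₀ (sub_pos.mpr hlt)] at h1
      linarith
  have hfmono : ∀ (v : V) (x z : ℝ), t0 ≤ x → x ≤ z → f v z ≤ f v x := by
    intro v x z hx hxz
    have := hgrow v x z (ht0.trans hx) hxz
    simp only [hfdef]
    linarith
  have hΦmono : ∀ x z : ℝ, t0 ≤ x → x ≤ z → Φ z ≤ Φ x := by
    intro x z hx hxz
    obtain ⟨v, -, hv⟩ := Finset.exists_mem_eq_sup' univ_nonempty (fun v => f v z)
    calc Φ z = f v z := hv
    _ ≤ f v x := hfmono v x z hx hxz
    _ ≤ Φ x := Finset.le_sup' (fun v => f v x) (mem_univ v)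
  -- distance bound
  have hdistD : ∀ a b : V, (G.dist a b : ℝ) ≤ (D : ℝ) := by
    intro a b
    have : G.dist a b ≤ D := hD ▸ Finset.le_sup (f := fun p : V × V => G.dist p.1 p.2)
      (mem_univ (a, b))
    exact_mod_cast this
  -- N v dominates Psi minus κD
  have hNM : ∀ v : V, Psi G L κ s v t0 - κ * D + L v t0 ≤ N v := by
    intro v
    obtain ⟨u, -, hu⟩ := Finset.exists_mem_eq_sup' univ_nonempty
      (fun w => L w t0 - L v t0 - 2 * (s : ℝ) * κ * (G.dist v w))
    have h1 : Psi G L κ s v t0 = L u t0 - L v t0 - 2 * (s : ℝ) * κ * (G.dist v u) := hu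
    have h2 : L u t0 - c * (G.dist v u) ≤ N v :=
      Finset.le_sup' (fun w => L w t0 - c * (G.dist v w)) (mem_univ u)
    have h3 : κ * (G.dist v u) ≤ κ * D :=
      mul_le_mul_of_nonneg_left (hdistD v u) hκ.le
    simp only [hcdef] at h2
    rw [h1]
    nlinarith [hdistD v u]
  have hΦ0 : Φ t0 ≤ PsiMax G L κ s t0 := by
    simp only [hΦdef]
    apply Finset.sup'_le
    intro v _
    have h1 : N v ≤ Psi G L κ s v t0 + L v t0 := by
      simp only [hNdef]
      apply Finset.sup'_le
      intro w _
      have h2 : L w t0 - L v t0 - 2 * (s : ℝ) * κ * (G.dist v w) ≤ Psi G L κ s v t0 :=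
        Finset.le_sup' (fun w => L w t0 - L v t0 - 2 * (s : ℝ) * κ * (G.dist v w)) (mem_univ w)
      have h3 : (0:ℝ) ≤ κ * (G.dist v w) := by positivity
      simp only [hcdef]
      nlinarith
    have h4 : Psi G L κ s v t0 ≤ PsiMax G L κ s t0 :=
      Finset.le_sup' (fun v => Psi G L κ s v t0) (mem_univ v)
    simp only [hfdef]
    linarith
  have hcatch' : PsiMax G L κ s t0 ≤ μ * (t1 - t0) := by
    have := hcatch
    rw [← le_sub_iff_add_le'] at this
    calc PsiMax G L κ s t0 = PsiMax G L κ s t0 / μ * μ := by field_simp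
    _ ≤ (t1 - t0) * μ := mul_le_mul_of_nonneg_right this hμ.le
    _ = μ * (t1 - t0) := mul_comm _ _
  -- maximizers are fast
  have hfast : ∀ x : ℝ, t0 ≤ x → 0 < Φ x → ∀ v : V, f v x = Φ x →
      1 + μ ≤ deriv (L v) x := by
    intro x hx hΦpos v hv
    have hbelow : ∀ u : V, f u x ≤ f v x := by
      intro u
      rw [hv]
      exact Finset.le_sup' (fun u => f u x) (mem_univ u)
    obtain ⟨w, -, hw⟩ := Finset.exists_mem_eq_sup' univ_nonempty
      (fun w => L w t0 - c * (G.dist v w))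
    have hNv : N v = L w t0 - c * (G.dist v w) := hw
    have hvw : v ≠ w := by
      rintro rfl
      rw [SimpleGraph.dist_self] at hNv
      have h5 : f v x ≤ 0 := by
        have := hgrow v t0 x (by linarith) hx
        simp only [hfdef, hNv]
        push_cast
        linarith
      rw [hv] at h5; linarith
    have hd1 : 1 ≤ G.dist v w := hconn.pos_dist_of_ne hvw
    obtain ⟨p, hp⟩ := hconn.exists_walk_length_eq_dist v w
    apply hfastI v x (ht0.trans hx)
    cases p with
    | nil => rw [SimpleGraph.Walk.length_nil] at hp; omega
    | @cons _ b _ hadj q =>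
      rw [SimpleGraph.Walk.length_cons] at hp
      refine ⟨s, ⟨b, hadj, ?_⟩, ?_⟩
      · -- existence of fast neighbor
        have hqd : G.dist b w ≤ q.length := SimpleGraph.dist_le q
        have hdb : (G.dist b w : ℝ) ≤ (G.dist v w : ℝ) - 1 := by
          have h9 : G.dist b w + 1 ≤ G.dist v w := by omega
          have h10 : ((G.dist b w + 1 : ℕ) : ℝ) ≤ ((G.dist v w : ℕ) : ℝ) := by
            exact_mod_cast h9
          push_cast at h10
          linarith
        have hNb : N v + c ≤ N b := by
          have h6 : L w t0 - c * (G.dist b w) ≤ N b := by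
            simp only [hNdef]
            exact Finset.le_sup' (fun u => L u t0 - c * (G.dist b u)) (mem_univ w)
          nlinarith
        have := hbelow b
        simp only [hfdef] at this
        simp only [hcdef] at hNb ⊢
        linarith
      · -- all neighbors bounded
        intro y hy
        have hdy : (G.dist y w : ℝ) ≤ (G.dist v w : ℝ) + 1 := by
          have h7 : G.dist y w ≤ G.dist y v + G.dist v w := hconn.dist_triangle
          have h8 : G.dist y v = 1 := SimpleGraph.dist_eq_one_iff_adj.mpr hy.symm
          rw [h8] at h7
          have h10 : ((G.dist y w : ℕ) : ℝ) ≤ ((1 + G.dist v w : ℕ) : ℝ) := by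
            exact_mod_cast h7
          push_cast at h10
          linarith
        have hNy : N v - c ≤ N y := by
          have h6 : L w t0 - c * (G.dist y w) ≤ N y := by
            simp only [hNdef]
            exact Finset.le_sup' (fun u => L u t0 - c * (G.dist y u)) (mem_univ w)
          nlinarith
        have := hbelow y
        simp only [hfdef] at this
        simp only [hcdef] at hNy ⊢
        linarith
  -- continuity
  have hfc : ∀ v : V, Continuous (f v) := by
    intro v
    simp only [hfdef]
    exact ((continuous_id.sub continuous_const).add continuous_const).sub (hdiff v).continuous
  have hΦc : Continuous Φ := by
    rw [continuous_iff_continuousAt]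
    intro x
    exact ContinuousAt.finset_sup'_apply univ_nonempty fun v _ => (hfc v).continuousAt
  have hfd : ∀ (v : V) (x : ℝ), HasDerivAt (f v) (1 - deriv (L v) x) x := by
    intro v x
    have h1 : HasDerivAt (L v) (deriv (L v) x) x := ((hdiff v) x).hasDerivAt
    have h2 : HasDerivAt (fun t : ℝ => (t - t0) + N v) 1 x := by
      simpa using ((hasDerivAt_id x).sub_const t0).add_const (N v)
    exact h2.sub h1
  -- main estimate : Φ t1 ≤ 0
  have hmain : Φ t1 ≤ 0 := by
    by_cases hex : ∃ t ∈ Set.Icc t0 t1, Φ t ≤ 0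
    · obtain ⟨t, ht, htle⟩ := hex
      exact (hΦmono t t1 ht.1 ht.2).trans htle
    · push_neg at hex
      by_contra h0
      push_neg at h0
      have hkey : ∀ ε : ℝ, 0 < ε → Φ t1 ≤ ε + ε * (t1 - t0) := by
        intro ε hε
        set B : ℝ → ℝ := fun t => Φ t0 + ε - (μ - ε) * (t - t0) with hBdef
        set F' : ℝ → ℝ := fun x => if Φ x = B x then -μ else 0 with hF'def
        have hBd : ∀ x : ℝ, HasDerivAt B (-(μ - ε)) x := by
          intro x
          have : HasDerivAt (fun t : ℝ => (μ - ε) * (t - t0)) (μ - ε) x := by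
            simpa using ((hasDerivAt_id x).sub_const t0).const_mul (μ - ε)
          simpa using (this.const_sub (Φ t0 + ε))
        have hslope : ∀ x ∈ Set.Ico t0 t1, ∀ r : ℝ, F' x < r →
            ∃ᶠ z in nhdsWithin x (Set.Ioi x), slope Φ x z < r := by
          intro x hx r hr
          simp only [hF'def] at hr
          by_cases htouch : Φ x = B x
          · rw [if_pos htouch] at hr
            have hΦx : 0 < Φ x := hex x ⟨hx.1, hx.2.le⟩
            have hev : ∀ v : V, ∀ᶠ z in nhdsWithin x (Set.Ioi x),
                f v z < Φ x + r * (z - x) := by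
              intro v
              by_cases hvmax : f v x = Φ x
              · have hLd : 1 + μ ≤ deriv (L v) x := hfast x hx.1 hΦx v hvmax
                have hds : 1 - deriv (L v) x < r := by linarith
                have htend := hasDerivAt_iff_tendsto_slope.mp (hfd v x)
                have hevs : ∀ᶠ z in nhdsWithin x {x}ᶜ, slope (f v) x z < r :=
                  htend (Iio_mem_nhds hds)
                have hevs' : ∀ᶠ z in nhdsWithin x (Set.Ioi x), slope (f v) x z < r :=
                  hevs.filter_mono (nhdsWithin_mono x fun z hz => ne_of_gt hz)
                have hmem : ∀ᶠ z in nhdsWithin x (Set.Ioi x), z ∈ Set.Ioi x :=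
                  self_mem_nhdsWithin
                filter_upwards [hevs', hmem] with z h1 h2
                rw [slope_def_field, div_lt_iff₀ (sub_pos.mpr h2)] at h1
                rw [← hvmax]
                linarith
              · have hvlt : f v x < Φ x :=
                  lt_of_le_of_ne (Finset.le_sup' (fun u => f u x) (mem_univ v)) hvmax
                have hcont : ContinuousAt (fun z => f v z - r * (z - x)) x :=
                  ((hfc v).continuousAt).sub (by fun_prop)
                have hlim : Filter.Tendsto (fun z => f v z - r * (z - x)) (nhds x)
                    (nhds (f v x)) := by
                  have := hcont.tendsto
                  simpa using this
                have := hlim (Iio_mem_nhds hvlt)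
                have hev2 : ∀ᶠ z in nhds x, f v z - r * (z - x) < Φ x := this
                have := hev2.filter_mono (nhdsWithin_le_nhds (s := Set.Ioi x))
                filter_upwards [this] with z hz
                linarith
            have hall : ∀ᶠ z in nhdsWithin x (Set.Ioi x),
                ∀ v : V, f v z < Φ x + r * (z - x) := Filter.eventually_all.mpr hev
            have hmem : ∀ᶠ z in nhdsWithin x (Set.Ioi x), z ∈ Set.Ioi x :=
              self_mem_nhdsWithin
            apply Filter.Eventually.frequently
            filter_upwards [hall, hmem] with z h1 h2
            have hΦz : Φ z < Φ x + r * (z - x) := by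
              simp only [hΦdef]
              apply (Finset.sup'_lt_iff univ_nonempty).mpr
              intro v _
              exact h1 v
            rw [slope_def_field, div_lt_iff₀ (sub_pos.mpr h2)]
            linarith
          · rw [if_neg htouch] at hr
            apply Filter.Eventually.frequently
            have hmem : Set.Ioo x t1 ∈ nhdsWithin x (Set.Ioi x) :=
              Ioo_mem_nhdsGT_of_mem ⟨le_refl x, hx.2⟩
            filter_upwards [hmem] with z hz
            have : Φ z ≤ Φ x := hΦmono x z hx.1 hz.1.le
            rw [slope_def_field]
            apply lt_of_le_of_lt (div_nonpos_of_nonpos_of_nonneg (by linarith)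
              (by linarith [hz.1.le])) hr
        have hbound : ∀ x ∈ Set.Ico t0 t1, Φ x = B x → F' x < -(μ - ε) := by
          intro x hx htouch
          simp only [hF'def, if_pos htouch]
          linarith
        have := image_le_of_liminf_slope_right_lt_deriv_boundary hΦc.continuousOn
          hslope (by simp only [hBdef, sub_self, mul_zero]; linarith) hBd hbound (Set.right_mem_Icc.mpr ht01)
        simp only [hBdef] at this
        calc Φ t1 ≤ Φ t0 + ε - (μ - ε) * (t1 - t0) := this
        _ ≤ μ * (t1 - t0) + ε - (μ - ε) * (t1 - t0) := by linarith [hΦ0.trans hcatch']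
        _ = ε + ε * (t1 - t0) := by ring
      have h1 : (0:ℝ) < 1 + (t1 - t0) := by linarith
      set ε := Φ t1 / (2 * (1 + (t1 - t0))) with hεdef
      have hε : 0 < ε := by positivity
      have h2 := hkey ε hε
      have h3 : ε + ε * (t1 - t0) = Φ t1 / 2 := by
        rw [hεdef]; field_simp
      rw [h3] at h2
      linarith
  -- conclude
  intro w
  have h1 : f w t1 ≤ 0 :=
    le_trans (Finset.le_sup' (fun v => f v t1) (mem_univ w)) hmain
  have h2 := hNM w
  simp only [hfdef] at h1
  linarith
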